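/- Let A be an f-adic ring and let γ : A → Â be the canonical map to its completion. If B⁺ is an open subring of Â contained in (Â)° and integrally closed in Â, then γ⁻¹(B⁺) is an open subring of A contained in A° and integrally closed in A. -/

import Mathlib

open Filter Topology

/-- A subset `S` of a topological ring is bounded if for every neighbourhood `U` of `0`
there is a neighbourhood `V` of `0` with `V · S ⊆ U`. -/
def IsBoundedSubset {A : Type*} [CommRing A] [TopologicalSpace A] (S : Set A) : Prop :=
  ∀ U ∈ 𝓝 (0 : A), ∃ V ∈ 𝓝 (0 : A), ∀ v ∈ V, ∀ s ∈ S, v * s ∈ U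

/-- An element of a topological ring is power-bounded if the set of its powers `aⁿ`, `n ≥ 1`,
is bounded. -/
def IsPowerBounded {A : Type*} [CommRing A] [TopologicalSpace A] (a : A) : Prop :=
  IsBoundedSubset {x : A | ∃ n : ℕ, 1 ≤ n ∧ x = a ^ n}

/-- `A°`, the set of power-bounded elements of a topological ring. -/
def powerBounded (A : Type*) [CommRing A] [TopologicalSpace A] : Set A :=
  {a : A | IsPowerBounded a}

/-- `I₀` is an ideal of definition of the subring `A₀` of the topological ring `A` if it is
finitely generated and its powers form a basis of neighbourhoods of `0` in `A`. -/
def IsIdealOfDefinition {A : Type*} [CommRing A] [TopologicalSpace A]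
    (A₀ : Subring A) (I₀ : Ideal A₀) : Prop :=
  I₀.FG ∧ (𝓝 (0 : A)).HasBasis (fun n : ℕ => 1 ≤ n)
    (fun n => ⇑A₀.subtype '' ((I₀ ^ n : Ideal A₀) : Set A₀))

/-- A ring of definition of a topological ring is an open subring admitting an ideal of
definition. -/
def IsRingOfDefinition {A : Type*} [CommRing A] [TopologicalSpace A] (A₀ : Subring A) : Prop :=
  IsOpen (A₀ : Set A) ∧ ∃ I₀ : Ideal A₀, IsIdealOfDefinition A₀ I₀

/-- A topological commutative ring is f-adic if it admits a ring of definition. -/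
def IsFAdic (A : Type*) [CommRing A] [TopologicalSpace A] : Prop :=
  ∃ A₀ : Subring A, IsRingOfDefinition A₀

/-- A subring `S` of `A` is integrally closed in `A` if every element of `A` integral
over `S` lies in `S`. -/
def IsIntegrallyClosedSubring {A : Type*} [CommRing A] (S : Subring A) : Prop :=
  ∀ x : A, IsIntegral S x → x ∈ S

theorem statement12 {A : Type*} [CommRing A] [UniformSpace A] [IsUniformAddGroup A]
    [IsTopologicalRing A] (hA : IsFAdic A)
    (γ : A →+* UniformSpace.Completion A)
    (hγ : γ = UniformSpace.Completion.coeRingHom)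
    (Bplus : Subring (UniformSpace.Completion A))
    (hopen : IsOpen (Bplus : Set (UniformSpace.Completion A)))
    (hpb : (Bplus : Set (UniformSpace.Completion A)) ⊆
      powerBounded (UniformSpace.Completion A))
    (hic : IsIntegrallyClosedSubring Bplus) :
    IsOpen ((Bplus.comap γ : Subring A) : Set A) ∧
    ((Bplus.comap γ : Subring A) : Set A) ⊆ powerBounded A ∧
    IsIntegrallyClosedSubring (Bplus.comap γ) := by
  subst hγ
  set γ : A →+* UniformSpace.Completion A := UniformSpace.Completion.coeRingHom with hγdef
  have hcont : Continuous γ := UniformSpace.Completion.continuous_coe A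
  have hind : IsInducing (γ : A → UniformSpace.Completion A) :=
    (UniformSpace.Completion.isUniformInducing_coe A).isInducing
  refine ⟨hopen.preimage hcont, ?_, ?_⟩
  · intro a ha
    intro U hU
    have hU' : U ∈ Filter.comap γ (𝓝 (γ 0)) := by
      rw [← hind.nhds_eq_comap]; exact hU
    obtain ⟨U', hU', hU'sub⟩ := hU'
    rw [map_zero] at hU'
    obtain ⟨V', hV', hV'p⟩ := hpb ha U' hU'
    refine ⟨γ ⁻¹' V', hcont.continuousAt.preimage_mem_nhds (by rwa [map_zero]), ?_⟩
    rintro v hv s ⟨n, hn, rfl⟩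
    apply hU'sub
    have : γ (v * a ^ n) = γ v * (γ a) ^ n := by simp [map_mul, map_pow]
    simp only [Set.mem_preimage, this]
    exact hV'p _ hv _ ⟨n, hn, rfl⟩
  · intro x hx
    obtain ⟨p, hmonic, heval⟩ := hx
    have hmem : ∀ y : (Bplus.comap γ), γ (y : A) ∈ Bplus := fun y => y.2
    set φ : (Bplus.comap γ) →+* Bplus :=
      (γ.comp (Bplus.comap γ).subtype).codRestrict Bplus (fun y => y.2) with hφ
    have hcomm : Bplus.subtype.comp φ = γ.comp (Bplus.comap γ).subtype := rfl
    have : IsIntegral Bplus (γ x) := by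
      refine ⟨p.map φ, hmonic.map φ, ?_⟩
      show Polynomial.eval₂ Bplus.subtype (γ x) (p.map φ) = 0
      have heval' : Polynomial.eval₂ (Bplus.comap γ).subtype x p = 0 := heval
      have : Polynomial.eval₂ Bplus.subtype (γ x) (p.map φ)
          = Polynomial.eval₂ (γ.comp (Bplus.comap γ).subtype) (γ x) p := by
        rw [Polynomial.eval₂_map, hcomm]
      rw [this, ← Polynomial.hom_eval₂, heval', map_zero]
    exact Subring.mem_comap.mpr (hic _ this)
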